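/- Let a < b < n be positive coprime integers odd case: with (t1,t2) = (1/2,0) if b is odd and (0,1/2) if b is even, and n ≡ r (mod 2a+2b) with r ∈ [0,2a+2b), and (g+h)r ≡ S (mod 2a+2b) with S ∈ [0,2a+2b), where g,h are integers with ag − bh = 1 chosen as in the paper. Then for n sufficiently large, μ_{a,b,n}(t1,t2,0) = 1/(2(a+b)) if S ∈ {0, 1, 2a+2b−1}; = (n+bS)/(2(a+b)(b+n)) if 2 ≤ S ≤ 2a; and = (n+2a²+2ab−aS)/(2(a+b)(a+n)) if 2a < S ≤ 2a+2b−2. -/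

import Mathlib

/-- Distance from a real number to the nearest integer. -/
noncomputable def dni (u : ℝ) : ℝ := |u - round u|

/-- Approximation cost of `(t1, t2)` relative to the two-element set `{a, b}`. -/
noncomputable def mu2 (a b : ℕ) (t1 t2 : ℝ) : ℝ :=
  ⨅ x : ℝ, max (dni (t1 - x * a)) (dni (t2 - x * b))

/-- Approximation cost of `(t1, t2, t3)` relative to the set `{a, b, n}`. -/
noncomputable def mu3 (a b n : ℕ) (t1 t2 t3 : ℝ) : ℝ :=
  ⨅ x : ℝ, max (dni (t1 - x * a)) (max (dni (t2 - x * b)) (dni (t3 - x * n)))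

/-- Angular Kronecker constant of `{a, b, n}`. -/
noncomputable def alpha3 (a b n : ℕ) : ℝ :=
  sSup {v : ℝ | ∃ t1 t2 t3 : ℝ, v = mu3 a b n t1 t2 t3}

/-- Binary Kronecker constant of `{a, b, n}`. -/
noncomputable def beta3 (a b n : ℕ) : ℝ :=
  sSup {v : ℝ | ∃ t1 t2 t3 : ℝ, t1 ∈ ({0, 1/2} : Set ℝ) ∧ t2 ∈ ({0, 1/2} : Set ℝ) ∧
    t3 ∈ ({0, 1/2} : Set ℝ) ∧ v = mu3 a b n t1 t2 t3}

set_option maxHeartbeats 4000000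

lemma dni_nonneg (u : ℝ) : 0 ≤ dni u := abs_nonneg _

lemma dni_le_int (u : ℝ) (m : ℤ) : dni u ≤ |u - m| := by
  rcases le_or_gt (dni u) |u - (m:ℝ)| with hle | hlt
  · exact hle
  · exfalso
    have h1 : |u - round u| ≤ 1/2 := abs_sub_round u
    have h2 : |((round u : ℤ) : ℝ) - (m:ℝ)| < 1 := by
      have he : ((round u : ℤ):ℝ) - m = (u - m) - (u - round u) := by ring
      calc |((round u : ℤ):ℝ) - m| ≤ |u - m| + |u - round u| := by
            rw [he]; exact abs_sub _ _
        _ < 1 := by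
            have : |u - (m:ℝ)| < dni u := hlt
            unfold dni at this
            linarith
    have h3 : round u = m := by
      have h4 : |round u - m| < 1 := by exact_mod_cast (by push_cast; exact h2 : |((round u - m : ℤ):ℝ)| < 1)
      have := Int.abs_lt_one_iff.mp h4
      omega
    rw [dni] at hlt
    rw [h3] at hlt
    exact lt_irrefl _ hlt

lemma dni_le_abs (u : ℝ) : dni u ≤ |u| := by simpa using dni_le_int u 0

lemma dni_add_int (u : ℝ) (m : ℤ) : dni (u + m) = dni u := by
  unfold dni
  rw [round_add_intCast]
  push_cast
  ring_nf

lemma dni_neg (u : ℝ) : dni (-u) = dni u := by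
  apply le_antisymm
  · calc dni (-u) ≤ |(-u) - ((-round u : ℤ):ℝ)| := dni_le_int _ _
      _ = |u - round u| := by push_cast; rw [← abs_neg]; ring_nf
      _ = dni u := rfl
  · calc dni u ≤ |u - ((-round (-u) : ℤ):ℝ)| := dni_le_int _ _
      _ = |(-u) - round (-u)| := by push_cast; rw [← abs_neg]; ring_nf
      _ = dni (-u) := rfl


theorem stmt_19 (a b : ℕ) (ha : 0 < a) (hab : a < b) (hcop : Nat.Coprime a b)
    (g h : ℤ) (hgh : a * g - b * h = 1)
    (hodd : Odd b → Even g) (heven : Even b → Even h) :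
    ∃ N : ℕ, ∀ n : ℕ, N ≤ n → b < n →
      ∀ t1 t2 : ℝ, t1 = (if Odd b then (1/2 : ℝ) else 0) →
        t2 = (if Odd b then (0 : ℝ) else 1/2) →
      ∀ S : ℕ, S < 2 * a + 2 * b →
        ((g + h) * (n % (2 * a + 2 * b) : ℕ)) % (2 * (a : ℤ) + 2 * b) = S →
        ((S = 0 ∨ S = 1 ∨ S = 2 * a + 2 * b - 1) →
          mu3 a b n t1 t2 0 = 1 / (2 * ((a : ℝ) + b))) ∧
        (2 ≤ S → S ≤ 2 * a →
          mu3 a b n t1 t2 0 = ((n : ℝ) + b * S) / (2 * ((a : ℝ) + b) * (b + n))) ∧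
        (2 * a < S → S ≤ 2 * a + 2 * b - 2 →
          mu3 a b n t1 t2 0 =
            ((n : ℝ) + 2 * a ^ 2 + 2 * a * b - a * S) / (2 * ((a : ℝ) + b) * (a + n))) := by
  refine ⟨(2*a+2*b)^3, ?_⟩
  intro n hNn hbn t1 t2 ht1 ht2 S hSlt hmod
  have hb : 0 < b := lt_trans ha hab
  have hn : 0 < n := lt_trans hb hbn
  have haR : (0:ℝ) < a := by exact_mod_cast ha
  have hbR : (0:ℝ) < b := by exact_mod_cast hb
  have hnR : (0:ℝ) < n := by exact_mod_cast hn
  have habR : (a:ℝ) < b := by exact_mod_cast hab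
  have hab0 : (0:ℝ) < (a:ℝ) + b := by linarith
  set M : ℝ := 2 * ((a:ℝ) + b) with hMdef
  have hM : (0:ℝ) < M := by positivity
  have hSR : (0:ℝ) ≤ S := Nat.cast_nonneg S
  have hSltR : (S:ℝ) < 2*(a:ℝ)+2*b := by exact_mod_cast hSlt
  have hSM : (S:ℝ) ≤ M - 1 := by
    have h1 : S + 1 ≤ 2*a+2*b := hSlt
    have h2 : (S:ℝ) + 1 ≤ 2*(a:ℝ)+2*b := by exact_mod_cast h1
    rw [hMdef]; linarith
  have hghR : (a:ℝ)*g - b*h = 1 := by exact_mod_cast hgh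
  have hhalf : ((a:ℝ)+b)/M = 1/2 := by rw [hMdef]; field_simp
  -- size of n
  have hnbig : (a:ℝ)*b*(2*(a:ℝ)+2*b) ≤ n := by
    have h0 : a*b*(2*a+2*b) ≤ (2*a+2*b)^3 := by
      calc a*b*(2*a+2*b) ≤ (2*a+2*b)*(2*a+2*b)*(2*a+2*b) :=
            Nat.mul_le_mul (Nat.mul_le_mul (by omega) (by omega)) le_rfl
        _ = (2*a+2*b)^3 := by ring
    have h2 : a*b*(2*a+2*b) ≤ n := le_trans h0 hNn
    exact_mod_cast h2
  have hnbig2 : (b:ℝ)*(2*(a:ℝ)+2*b) ≤ n := by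
    have h1 : (1:ℝ) ≤ a := by exact_mod_cast ha
    nlinarith [hnbig, mul_nonneg (mul_nonneg (sub_nonneg.mpr h1) hbR.le)
      (by positivity : (0:ℝ) ≤ 2*(a:ℝ)+2*b)]
  -- the integer c
  obtain ⟨c, hc⟩ : ∃ c : ℤ, ((g:ℤ)+h)*n = S + (2*(a:ℤ)+2*b)*c := by
    set Mz : ℤ := 2*(a:ℤ)+2*b with hMz
    have hMzc : Mz = ((2*a+2*b : ℕ) : ℤ) := by push_cast; ring
    have hr : ((n % (2*a+2*b) : ℕ) : ℤ) = (n:ℤ) % Mz := by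
      rw [hMzc]; exact_mod_cast Int.natCast_mod n (2*a+2*b)
    have hS0 : (0:ℤ) ≤ S := Int.ofNat_nonneg S
    have hSMz : (S:ℤ) < Mz := by rw [hMzc]; exact_mod_cast hSlt
    have h2 : (S:ℤ) % Mz = S := Int.emod_eq_of_lt hS0 hSMz
    have hnr : (n:ℤ) ≡ ((n % (2*a+2*b) : ℕ):ℤ) [ZMOD Mz] := by
      rw [Int.ModEq, hr, Int.emod_emod_of_dvd _ dvd_rfl]
    have h1 : ((g+h)*(n:ℤ)) ≡ S [ZMOD Mz] := by
      calc (g+h)*(n:ℤ) ≡ (g+h)*((n % (2*a+2*b) : ℕ):ℤ) [ZMOD Mz] := hnr.mul_left _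
        _ ≡ S [ZMOD Mz] := by rw [Int.ModEq, hmod, h2]
    obtain ⟨c, hc'⟩ := (Int.ModEq.dvd h1.symm)
    exact ⟨c, by linarith⟩
  have hcR : ((g:ℝ)+h)*n = S + M*c := by
    have h2 : ((g:ℝ)+h)*n = (S:ℝ) + (2*(a:ℝ)+2*b)*c := by exact_mod_cast hc
    rw [hMdef]; linear_combination h2
  -- parity data
  obtain ⟨⟨K, hbt⟩, ⟨L, hgt⟩⟩ : (∃ K : ℤ, (b:ℝ)*t1 - a*t2 = K + 1/2) ∧
      (∃ L : ℤ, (g:ℝ)*t1 - h*t2 = L) := by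
    rcases Nat.even_or_odd b with hbe | hbo
    · have hbo' : ¬ Odd b := Nat.not_odd_iff_even.mpr hbe
      rw [ht1, ht2, if_neg hbo', if_neg hbo']
      have hao : Odd a := by
        rcases Nat.even_or_odd a with hae | hao
        · exfalso
          have h2 : 2 ∣ Nat.gcd a b := Nat.dvd_gcd hae.two_dvd hbe.two_dvd
          rw [hcop] at h2
          omega
        · exact hao
      obtain ⟨j, hj⟩ := hao
      obtain ⟨i, hi⟩ := heven hbe
      exact ⟨⟨-(j:ℤ)-1, by push_cast [hj]; ring⟩, ⟨-i, by push_cast [hi]; ring⟩⟩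
    · rw [ht1, ht2, if_pos hbo, if_pos hbo]
      obtain ⟨i, hi⟩ := hodd hbo
      obtain ⟨j, hj⟩ := hbo
      exact ⟨⟨(j:ℤ), by push_cast [hj]; ring⟩, ⟨i, by push_cast [hi]; ring⟩⟩
  -- values
  set v2 : ℝ := ((n:ℝ) + b*S)/(M*((b:ℝ)+n)) with hv2def
  set v3 : ℝ := ((n:ℝ) + 2*(a:ℝ)^2 + 2*a*b - a*S)/(M*((a:ℝ)+n)) with hv3def
  have hv2pos : 0 < v2 := by
    rw [hv2def]
    exact div_pos (by nlinarith [hnR, mul_nonneg hbR.le hSR]) (by positivity)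
  have hv3pos : 0 < v3 := by
    rw [hv3def]
    apply div_pos _ (by positivity)
    have h1 := mul_le_mul_of_nonneg_left hSM haR.le
    rw [hMdef] at h1
    nlinarith [hnR, haR]
  have hv2le : v2 ≤ 3/M := by
    rw [hv2def, div_le_div_iff₀ (by positivity) hM]
    have h1 : (b:ℝ)*S ≤ b*(M-1) := mul_le_mul_of_nonneg_left hSM hbR.le
    have h2 : (b:ℝ)*S ≤ n := by rw [hMdef] at h1; nlinarith [hnbig2, hbR]
    calc ((n:ℝ) + b*S)*M ≤ (3*((b:ℝ)+n))*M := by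
          apply mul_le_mul_of_nonneg_right _ hM.le
          linarith
      _ = 3*(M*((b:ℝ)+n)) := by ring
  -- generic upper bound
  have hkey3 : ∀ t : ℝ, (n:ℝ)*(((g:ℝ)+h)/M + t) = (S:ℝ)/M + c + t*n := by
    intro t
    have hM0 : M ≠ 0 := ne_of_gt hM
    field_simp
    linear_combination hcR
  have habne : (a:ℝ)+b ≠ 0 := ne_of_gt hab0
  have hupper : ∀ t : ℝ, mu3 a b n t1 t2 0 ≤
      max |1/M + t*(a:ℝ)| (max |1/M - t*(b:ℝ)| (dni ((S:ℝ)/M + t*(n:ℝ)))) := by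
    intro t
    set e1 : ℝ := 1/M + t*(a:ℝ) with he1
    set e2 : ℝ := -(1/M) + t*(b:ℝ) with he2
    set x : ℝ := (g:ℝ)*(t1 - e1) - (h:ℝ)*(t2 - e2) with hx
    have hee : (b:ℝ)*e1 - a*e2 = 1/2 := by
      rw [he1, he2, hMdef]; field_simp; ring
    have hA : t1 - x*(a:ℝ) = e1 + ((-(h*K) : ℤ) : ℝ) := by
      push_cast
      rw [hx]
      linear_combination (-(t1 - e1))*hghR + (-(h:ℝ))*hbt + (h:ℝ)*hee
    have hB : t2 - x*(b:ℝ) = e2 + ((-(g*K) : ℤ) : ℝ) := by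
      push_cast
      rw [hx]
      linear_combination (-(t2 - e2))*hghR + (-(g:ℝ))*hbt + (g:ℝ)*hee
    have hge : (g:ℝ)*e1 - h*e2 = ((g:ℝ)+h)/M + t := by
      rw [he1, he2]
      linear_combination t*hghR
    have hC : (0:ℝ) - x*(n:ℝ) = ((S:ℝ)/M + t*(n:ℝ)) + ((c - n*L : ℤ) : ℝ) := by
      push_cast
      rw [hx]
      linear_combination (-(n:ℝ))*hgt + (n:ℝ)*hge + hkey3 t
    have hb1 : dni (t1 - x*(a:ℝ)) ≤ |e1| := by rw [hA, dni_add_int]; exact dni_le_abs _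
    have hb2 : dni (t2 - x*(b:ℝ)) ≤ |e2| := by rw [hB, dni_add_int]; exact dni_le_abs _
    have hb3 : dni ((0:ℝ) - x*(n:ℝ)) = dni ((S:ℝ)/M + t*(n:ℝ)) := by rw [hC, dni_add_int]
    have hmu : mu3 a b n t1 t2 0 ≤
        max (dni (t1 - x*(a:ℝ))) (max (dni (t2 - x*(b:ℝ))) (dni ((0:ℝ) - x*(n:ℝ)))) := by
      unfold mu3
      apply ciInf_le
      refine ⟨0, ?_⟩
      rintro y ⟨x', rfl⟩
      exact le_trans (dni_nonneg _) (le_max_left _ _)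
    have he2' : |e2| = |1/M - t*(b:ℝ)| := by
      have hne : e2 = -(1/M - t*(b:ℝ)) := by rw [he2]; ring
      rw [hne, abs_neg]
    calc mu3 a b n t1 t2 0 ≤ _ := hmu
      _ ≤ max |e1| (max |e2| (dni ((S:ℝ)/M + t*(n:ℝ)))) :=
          max_le_max hb1 (max_le_max hb2 (le_of_eq hb3))
      _ = max |e1| (max |1/M - t*(b:ℝ)| (dni ((S:ℝ)/M + t*(n:ℝ)))) := by rw [he2']
  -- G bound
  have hG : ∀ u : ℝ, min v2 v3 ≤
      max |1/M + u*(a:ℝ)| (max |1/M - u*(b:ℝ)| (dni ((S:ℝ)/M + u*(n:ℝ)))) := by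
    intro u
    set m : ℤ := round ((S:ℝ)/M + u*(n:ℝ)) with hm
    set W : ℝ := max |1/M + u*(a:ℝ)| (max |1/M - u*(b:ℝ)| (dni ((S:ℝ)/M + u*(n:ℝ)))) with hW
    have hdm : dni ((S:ℝ)/M + u*(n:ℝ)) = |(S:ℝ)/M + u*(n:ℝ) - m| := rfl
    have h1 : |1/M + u*(a:ℝ)| ≤ W := le_max_left _ _
    have h2 : |1/M - u*(b:ℝ)| ≤ W := le_trans (le_max_left _ _) (le_max_right _ _)
    have h3 : |(S:ℝ)/M + u*(n:ℝ) - m| ≤ W := by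
      rw [← hdm]; exact le_trans (le_max_right _ _) (le_max_right _ _)
    have hW0 : 0 ≤ W := le_trans (abs_nonneg _) h1
    have hM0 : M ≠ 0 := ne_of_gt hM
    rcases le_or_gt m 0 with hm0 | hm1
    · -- W ≥ v2
      refine le_trans (min_le_left _ _) ?_
      have hmR : (m:ℝ) ≤ 0 := by exact_mod_cast hm0
      have key : (n:ℝ)/M + ((b:ℝ)*S)/M - b*m ≤ ((n:ℝ)+b)*W := by
        calc (n:ℝ)/M + ((b:ℝ)*S)/M - b*m
            = (n:ℝ)*(1/M - u*(b:ℝ)) + b*((S:ℝ)/M + u*(n:ℝ) - m) := by ring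
          _ ≤ (n:ℝ)*|1/M - u*(b:ℝ)| + b*|(S:ℝ)/M + u*(n:ℝ) - m| := by
              gcongr <;> exact le_abs_self _
          _ ≤ (n:ℝ)*W + b*W := by gcongr
          _ = ((n:ℝ)+b)*W := by ring
      rw [hv2def, div_le_iff₀ (by positivity)]
      have hbm : (b:ℝ)*m ≤ 0 := mul_nonpos_of_nonneg_of_nonpos hbR.le hmR
      have key2 : (n:ℝ)/M + ((b:ℝ)*S)/M ≤ ((n:ℝ)+b)*W := by linarith
      have e : (n:ℝ) + (b:ℝ)*S = M*((n:ℝ)/M + ((b:ℝ)*S)/M) := by field_simp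
      calc (n:ℝ) + (b:ℝ)*S = M*((n:ℝ)/M + ((b:ℝ)*S)/M) := e
        _ ≤ M*(((n:ℝ)+b)*W) := by
            apply mul_le_mul_of_nonneg_left key2 hM.le
        _ = W*(M*((b:ℝ)+n)) := by ring
    · -- W ≥ v3
      refine le_trans (min_le_right _ _) ?_
      have hmR : (1:ℝ) ≤ m := by exact_mod_cast hm1
      have key : (n:ℝ)/M + (a:ℝ)*m - ((a:ℝ)*S)/M ≤ ((n:ℝ)+a)*W := by
        calc (n:ℝ)/M + (a:ℝ)*m - ((a:ℝ)*S)/M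
            = (n:ℝ)*(1/M + u*(a:ℝ)) + a*(-((S:ℝ)/M + u*(n:ℝ) - m)) := by ring
          _ ≤ (n:ℝ)*|1/M + u*(a:ℝ)| + a*|(S:ℝ)/M + u*(n:ℝ) - m| := by
              gcongr
              · exact le_abs_self _
              · rw [← abs_neg]; exact le_abs_self _
          _ ≤ (n:ℝ)*W + a*W := by gcongr
          _ = ((n:ℝ)+a)*W := by ring
      rw [hv3def, div_le_iff₀ (by positivity)]
      have ham : (a:ℝ) ≤ a*m := by nlinarith [haR, hmR]
      have key2 : (n:ℝ)/M + (a:ℝ) - ((a:ℝ)*S)/M ≤ ((n:ℝ)+a)*W := by linarith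
      have e : (n:ℝ) + 2*(a:ℝ)^2 + 2*a*b - a*S
          = M*((n:ℝ)/M + (a:ℝ) - ((a:ℝ)*S)/M) := by rw [hMdef]; field_simp; ring
      calc (n:ℝ) + 2*(a:ℝ)^2 + 2*a*b - a*S = M*((n:ℝ)/M + (a:ℝ) - ((a:ℝ)*S)/M) := e
        _ ≤ M*(((n:ℝ)+a)*W) := by
            apply mul_le_mul_of_nonneg_left key2 hM.le
        _ = W*(M*((a:ℝ)+n)) := by ring
  -- universal lower bounds
  have hlow1 : ∀ x : ℝ, 1/M ≤
      max (dni (t1 - x * a)) (max (dni (t2 - x * b)) (dni ((0:ℝ) - x * n))) := by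
    intro x
    set W : ℝ := max (dni (t1 - x * (a:ℝ))) (max (dni (t2 - x * (b:ℝ))) (dni ((0:ℝ) - x * (n:ℝ)))) with hWd
    set p : ℤ := round (t1 - x*(a:ℝ)) with hp
    set q : ℤ := round (t2 - x*(b:ℝ)) with hq
    set e1 : ℝ := t1 - x*(a:ℝ) - p with he1
    set e2 : ℝ := t2 - x*(b:ℝ) - q with he2
    have hd1 : dni (t1 - x*(a:ℝ)) = |e1| := rfl
    have hd2 : dni (t2 - x*(b:ℝ)) = |e2| := rfl
    have h1 : |e1| ≤ W := by rw [← hd1]; exact le_max_left _ _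
    have h2 : |e2| ≤ W := by rw [← hd2]; exact le_trans (le_max_left _ _) (le_max_right _ _)
    have hkey : (b:ℝ)*e1 - a*e2 = ((K - (b*p - a*q) : ℤ):ℝ) + 1/2 := by
      push_cast
      rw [he1, he2]
      linear_combination hbt
    have h12 : 1/2 ≤ |(b:ℝ)*e1 - a*e2| := by
      rw [hkey]
      rcases le_or_gt 0 (K - (b*p - a*q)) with hj | hj
      · have hjR : (0:ℝ) ≤ ((K - (b*p-a*q) : ℤ):ℝ) := by exact_mod_cast hj
        rw [abs_of_nonneg (by linarith)]; linarith
      · have hj' : (K - (b*p-a*q) : ℤ) ≤ -1 := by omega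
        have hjR : ((K - (b*p-a*q) : ℤ):ℝ) ≤ -1 := by exact_mod_cast hj'
        rw [abs_of_nonpos (by linarith)]; linarith
    have hchain : |(b:ℝ)*e1 - a*e2| ≤ ((a:ℝ)+b)*W := by
      calc |(b:ℝ)*e1 - a*e2| ≤ |(b:ℝ)*e1| + |(a:ℝ)*e2| := abs_sub _ _
        _ = b*|e1| + a*|e2| := by rw [abs_mul, abs_mul, abs_of_pos hbR, abs_of_pos haR]
        _ ≤ b*W + a*W := by
            have hW0 : 0 ≤ W := le_trans (abs_nonneg _) h1
            gcongr
        _ = ((a:ℝ)+b)*W := by ring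
    rw [div_le_iff₀ hM, hMdef]
    nlinarith [h12, hchain]
  have hlowmin : ∀ x : ℝ, min v2 v3 ≤
      max (dni (t1 - x * a)) (max (dni (t2 - x * b)) (dni ((0:ℝ) - x * n))) := by
    intro x
    set W : ℝ := max (dni (t1 - x * (a:ℝ))) (max (dni (t2 - x * (b:ℝ))) (dni ((0:ℝ) - x * (n:ℝ)))) with hWd
    by_contra hcon
    push_neg at hcon
    set p : ℤ := round (t1 - x*(a:ℝ)) with hp
    set q : ℤ := round (t2 - x*(b:ℝ)) with hq
    set e1 : ℝ := t1 - x*(a:ℝ) - p with he1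
    set e2 : ℝ := t2 - x*(b:ℝ) - q with he2
    have hd1 : dni (t1 - x*(a:ℝ)) = |e1| := rfl
    have hd2 : dni (t2 - x*(b:ℝ)) = |e2| := rfl
    have h1 : |e1| ≤ W := by rw [← hd1]; exact le_max_left _ _
    have h2 : |e2| ≤ W := by rw [← hd2]; exact le_trans (le_max_left _ _) (le_max_right _ _)
    have hd3W : dni ((0:ℝ) - x*(n:ℝ)) ≤ W := le_trans (le_max_right _ _) (le_max_right _ _)
    have hW0 : 0 ≤ W := le_trans (abs_nonneg _) h1
    have hWv2 : W < v2 := lt_of_lt_of_le hcon (min_le_left _ _)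
    have hW3M : W < 3/M := lt_of_lt_of_le hWv2 hv2le
    have hkey : (b:ℝ)*e1 - a*e2 = ((K - (b*p - a*q) : ℤ):ℝ) + 1/2 := by
      push_cast
      rw [he1, he2]
      linear_combination hbt
    have habs : |((K - (b*p - a*q) : ℤ):ℝ) + 1/2| ≤ ((a:ℝ)+b)*W := by
      rw [← hkey]
      calc |(b:ℝ)*e1 - a*e2| ≤ |(b:ℝ)*e1| + |(a:ℝ)*e2| := abs_sub _ _
        _ = b*|e1| + a*|e2| := by rw [abs_mul, abs_mul, abs_of_pos hbR, abs_of_pos haR]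
        _ ≤ b*W + a*W := by gcongr
        _ = ((a:ℝ)+b)*W := by ring
    have hJ32 : |((K - (b*p - a*q) : ℤ):ℝ) + 1/2| < 3/2 := by
      have hs : ((a:ℝ)+b)*W < ((a:ℝ)+b)*(3/M) := by
        exact mul_lt_mul_of_pos_left hW3M hab0
      have h32 : ((a:ℝ)+b)*(3/M) = 3/2 := by rw [hMdef]; field_simp
      linarith
    have hJcases : K - (b*p - a*q) = 0 ∨ K - (b*p - a*q) = -1 := by
      obtain ⟨hl, hr⟩ := abs_lt.mp hJ32
      have hlt : ((K - (b*p - a*q) : ℤ):ℝ) < 1 := by linarith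
      have hgt : (-2:ℝ) < ((K - (b*p - a*q) : ℤ):ℝ) := by linarith
      have hlt' : (K - (b*p - a*q) : ℤ) < 1 := by exact_mod_cast hlt
      have hgt' : (-2:ℤ) < (K - (b*p - a*q) : ℤ) := by exact_mod_cast hgt
      omega
    have haa : (a:ℝ) ≠ 0 := ne_of_gt haR
    have hxa : x*(a:ℝ) = t1 - e1 - p := by rw [he1]; ring
    have hxb : x*(b:ℝ) = t2 - e2 - q := by rw [he2]; ring
    have hxid : x = (g:ℝ)*(x*(a:ℝ)) - h*(x*(b:ℝ)) := by linear_combination (-x)*hghR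
    rcases hJcases with hJ0 | hJ1
    · -- sigma = 1
      have hkey0 : (b:ℝ)*e1 - a*e2 = 1/2 := by
        rw [hkey, hJ0]; norm_num
      set u : ℝ := (e1 - 1/M)/(a:ℝ) with hu
      have he1u : e1 = 1/M + u*(a:ℝ) := by rw [hu]; field_simp; ring
      have he2u : e2 = -(1/M) + u*(b:ℝ) := by
        have h' : (a:ℝ)*e2 = (a:ℝ)*(-(1/M) + u*(b:ℝ)) := by
          linear_combination (-1)*hkey0 + (b:ℝ)*he1u + hhalf
        exact mul_left_cancel₀ haa h'
      have hge : (g:ℝ)*e1 - h*e2 = ((g:ℝ)+h)/M + u := by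
        rw [he1u, he2u]; linear_combination u*hghR
      have hC : (0:ℝ) - x*(n:ℝ) = ((S:ℝ)/M + u*(n:ℝ)) + ((c - n*L + n*(g*p - h*q) : ℤ):ℝ) := by
        push_cast
        linear_combination (-(n:ℝ))*hxid + (-(n:ℝ)*(g:ℝ))*hxa + ((n:ℝ)*(h:ℝ))*hxb +
          (-(n:ℝ))*hgt + (n:ℝ)*hge + hkey3 u
      have hd3' : dni ((S:ℝ)/M + u*(n:ℝ)) ≤ W := by
        have := hd3W
        rw [hC, dni_add_int] at this
        exact this
      have hWe : max |1/M + u*(a:ℝ)| (max |1/M - u*(b:ℝ)| (dni ((S:ℝ)/M + u*(n:ℝ)))) ≤ W := by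
        apply max_le
        · rw [← he1u]; exact h1
        · apply max_le
          · have hne : -(1/M) + u*(b:ℝ) = -(1/M - u*(b:ℝ)) := by ring
            have : |e2| = |1/M - u*(b:ℝ)| := by rw [he2u, hne, abs_neg]
            rw [← this]; exact h2
          · exact hd3'
      linarith [hG u, hWe, hcon]
    · -- sigma = -1
      have hkey0 : (b:ℝ)*e1 - a*e2 = -(1/2) := by
        rw [hkey, hJ1]; norm_num
      set u : ℝ := -((e1 + 1/M)/(a:ℝ)) with hu
      have he1u : e1 = -(1/M + u*(a:ℝ)) := by rw [hu]; field_simp; ring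
      have he2u : e2 = 1/M - u*(b:ℝ) := by
        have h' : (a:ℝ)*e2 = (a:ℝ)*(1/M - u*(b:ℝ)) := by
          linear_combination (-1)*hkey0 + (b:ℝ)*he1u + (-1)*hhalf
        exact mul_left_cancel₀ haa h'
      have hge : (g:ℝ)*e1 - h*e2 = -(((g:ℝ)+h)/M) - u := by
        rw [he1u, he2u]; linear_combination (-u)*hghR
      have hC : (0:ℝ) - x*(n:ℝ) = -((S:ℝ)/M + u*(n:ℝ)) + ((-(n*L) - c + n*(g*p - h*q) : ℤ):ℝ) := by
        push_cast
        linear_combination (-(n:ℝ))*hxid + (-(n:ℝ)*(g:ℝ))*hxa + ((n:ℝ)*(h:ℝ))*hxb +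
          (-(n:ℝ))*hgt + (n:ℝ)*hge + (-1)*(hkey3 u)
      have hd3' : dni ((S:ℝ)/M + u*(n:ℝ)) ≤ W := by
        have hthis := hd3W
        rw [hC, dni_add_int, dni_neg] at hthis
        exact hthis
      have hWe : max |1/M + u*(a:ℝ)| (max |1/M - u*(b:ℝ)| (dni ((S:ℝ)/M + u*(n:ℝ)))) ≤ W := by
        apply max_le
        · have : |e1| = |1/M + u*(a:ℝ)| := by rw [he1u, abs_neg]
          rw [← this]; exact h1
        · apply max_le
          · rw [← he2u]; exact h2
          · exact hd3'
      linarith [hG u, hWe, hcon]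
  -- comparisons
  have habR1 : (a:ℝ)+1 ≤ b := by exact_mod_cast hab
  have hcmp2 : (S:ℝ) ≤ 2*a → v2 ≤ v3 := by
    intro hS2a
    rw [hv2def, hv3def, div_le_div_iff₀ (by positivity) (by positivity)]
    have hexp : ((n:ℝ)+2*(a:ℝ)^2+2*(a:ℝ)*b-a*S)*(M*((b:ℝ)+n)) - ((n:ℝ)+(b:ℝ)*S)*(M*((a:ℝ)+n))
        = M*((n:ℝ)*((b:ℝ)-a) + (n:ℝ)*(((a:ℝ)+b)*(2*(a:ℝ)-S)) + (a:ℝ)*b*(2*(a:ℝ)+2*b-2*S)) := by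
      ring
    have ht1' : (n:ℝ)*1 ≤ (n:ℝ)*((b:ℝ)-a) := by
      apply mul_le_mul_of_nonneg_left _ hnR.le
      linarith
    have ht2' : 0 ≤ (n:ℝ)*(((a:ℝ)+b)*(2*(a:ℝ)-S)) := by
      apply mul_nonneg hnR.le
      apply mul_nonneg hab0.le
      linarith
    have ht3' : -((a:ℝ)*b*(2*(a:ℝ)+2*b)) ≤ (a:ℝ)*b*(2*(a:ℝ)+2*(b:ℝ)-2*S) := by
      have h7 := mul_nonneg (mul_nonneg haR.le hbR.le)
        (show (0:ℝ) ≤ 2*(2*(a:ℝ)+2*b) - 2*S by linarith)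
      linarith [h7]
    have hsum : 0 ≤ (n:ℝ)*((b:ℝ)-a) + (n:ℝ)*(((a:ℝ)+b)*(2*(a:ℝ)-S)) + (a:ℝ)*b*(2*(a:ℝ)+2*b-2*S) := by
      linarith [hnbig]
    have h9 : 0 ≤ M*((n:ℝ)*((b:ℝ)-a) + (n:ℝ)*(((a:ℝ)+b)*(2*(a:ℝ)-S)) + (a:ℝ)*b*(2*(a:ℝ)+2*b-2*S)) :=
      mul_nonneg hM.le hsum
    linarith [hexp, h9]
  have hcmp3 : 2*(a:ℝ) + 1 ≤ S → v3 ≤ v2 := by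
    intro hS3a
    rw [hv2def, hv3def, div_le_div_iff₀ (by positivity) (by positivity)]
    have hexp : ((n:ℝ)+(b:ℝ)*S)*(M*((a:ℝ)+n)) - ((n:ℝ)+2*(a:ℝ)^2+2*(a:ℝ)*b-a*S)*(M*((b:ℝ)+n))
        = M*((n:ℝ)*(((a:ℝ)+b)*((S:ℝ)-2*a) - ((b:ℝ)-a)) + (a:ℝ)*b*(2*(S:ℝ)-(2*(a:ℝ)+2*b))) := by
      ring
    have hin : 2*(a:ℝ) ≤ ((a:ℝ)+b)*((S:ℝ)-2*a) - ((b:ℝ)-a) := by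
      have h5 : ((a:ℝ)+b)*1 ≤ ((a:ℝ)+b)*((S:ℝ)-2*a) := by
        apply mul_le_mul_of_nonneg_left _ hab0.le
        linarith
      linarith
    have ht1' : (n:ℝ)*(2*(a:ℝ)) ≤ (n:ℝ)*(((a:ℝ)+b)*((S:ℝ)-2*a) - ((b:ℝ)-a)) :=
      mul_le_mul_of_nonneg_left hin hnR.le
    have ht3' : -((a:ℝ)*b*(2*(a:ℝ)+2*b)) ≤ (a:ℝ)*b*(2*(S:ℝ)-(2*(a:ℝ)+2*b)) := by
      have h7 := mul_nonneg (mul_nonneg haR.le hbR.le)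
        (show (0:ℝ) ≤ 2*(S:ℝ) by linarith)
      linarith [h7]
    have ha1 : (1:ℝ) ≤ a := by exact_mod_cast ha
    have hn2a : (n:ℝ) ≤ (n:ℝ)*(2*(a:ℝ)) := by
      have h7 := mul_nonneg hnR.le (show (0:ℝ) ≤ 2*(a:ℝ)-1 by linarith)
      linarith [h7]
    have hsum : 0 ≤ (n:ℝ)*(((a:ℝ)+b)*((S:ℝ)-2*a) - ((b:ℝ)-a)) + (a:ℝ)*b*(2*(S:ℝ)-(2*(a:ℝ)+2*b)) := by
      linarith [hnbig]
    have h9 : 0 ≤ M*((n:ℝ)*(((a:ℝ)+b)*((S:ℝ)-2*a) - ((b:ℝ)-a)) + (a:ℝ)*b*(2*(S:ℝ)-(2*(a:ℝ)+2*b))) :=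
      mul_nonneg hM.le hsum
    linarith [hexp, h9]
  have ha1 : (1:ℝ) ≤ a := by exact_mod_cast ha
  have hb1 : (1:ℝ) ≤ b := by exact_mod_cast hb
  refine ⟨?_, ?_, ?_⟩
  · -- branch 1
    intro hS1
    have h0 := hupper 0
    have hpos1M : (0:ℝ) < 1/M := by positivity
    have ea : |1/M + 0*(a:ℝ)| = 1/M := by rw [zero_mul, add_zero, abs_of_pos hpos1M]
    have eb : |1/M - 0*(b:ℝ)| = 1/M := by rw [zero_mul, sub_zero, abs_of_pos hpos1M]
    have ec : dni ((S:ℝ)/M + 0*(n:ℝ)) ≤ 1/M := by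
      rw [zero_mul, add_zero]
      rcases hS1 with hS' | hS' | hS'
      · have : (S:ℝ) = 0 := by exact_mod_cast hS'
        rw [this, zero_div]
        have : dni 0 = 0 := by simp [dni]
        rw [this]; linarith
      · have : (S:ℝ) = 1 := by exact_mod_cast hS'
        rw [this]
        exact le_trans (dni_le_abs _) (le_of_eq (abs_of_pos hpos1M))
      · have h5 : S + 1 = 2*a+2*b := by omega
        have h6 : (S:ℝ) + 1 = 2*(a:ℝ)+2*b := by exact_mod_cast h5
        have hSR' : (S:ℝ) = M - 1 := by rw [hMdef]; linarith
        have e7 : (S:ℝ)/M - ((1:ℤ):ℝ) = -(1/M) := by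
          rw [hSR', hMdef]; push_cast; field_simp; ring
        calc dni ((S:ℝ)/M) ≤ |(S:ℝ)/M - ((1:ℤ):ℝ)| := dni_le_int _ 1
          _ = 1/M := by rw [e7, abs_neg, abs_of_pos hpos1M]
    have hup : mu3 a b n t1 t2 0 ≤ 1/M :=
      le_trans h0 (max_le (le_of_eq ea) (max_le (le_of_eq eb) ec))
    have hlo : 1/M ≤ mu3 a b n t1 t2 0 := by unfold mu3; exact le_ciInf hlow1
    exact le_antisymm hup hlo
  · -- branch 2
    intro hS2 hS2'
    have hS2R : (2:ℝ) ≤ (S:ℝ) := by exact_mod_cast hS2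
    have hS2aR : (S:ℝ) ≤ 2*(a:ℝ) := by exact_mod_cast hS2'
    have hv23 : v2 ≤ v3 := hcmp2 hS2aR
    have hlo : v2 ≤ mu3 a b n t1 t2 0 := by
      have h9 : min v2 v3 ≤ mu3 a b n t1 t2 0 := by unfold mu3; exact le_ciInf hlowmin
      rw [min_eq_left hv23] at h9
      exact h9
    set t : ℝ := -(((S:ℝ)-1)/(M*((b:ℝ)+n))) with htdef
    have hden : (0:ℝ) < M*((b:ℝ)+n) := by positivity
    have e2' : 1/M - t*(b:ℝ) = v2 := by
      rw [htdef, hv2def, hMdef]; field_simp; ring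
    have e3' : (S:ℝ)/M + t*(n:ℝ) = v2 := by
      rw [htdef, hv2def, hMdef]; field_simp; ring
    have e1' : 1/M + t*(a:ℝ) = ((b:ℝ)+(n:ℝ)-(a:ℝ)*((S:ℝ)-1))/(M*((b:ℝ)+n)) := by
      rw [htdef, hMdef]; field_simp; ring
    have c1 : |1/M + t*(a:ℝ)| ≤ v2 := by
      rw [e1', hv2def, abs_div, abs_of_pos hden, div_le_div_iff₀ hden hden]
      apply mul_le_mul_of_nonneg_right _ hden.le
      rw [abs_le]
      constructor
      · have m1 : 0 ≤ (a:ℝ)*b*(2*(a:ℝ)+2*b-2) := by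
          apply mul_nonneg (mul_nonneg haR.le hbR.le); linarith
        have m2 : 0 ≤ 2*(a:ℝ)*((b:ℝ)-(a:ℝ)) := by
          apply mul_nonneg (by linarith); linarith
        have m3 : (a:ℝ)*S ≤ (a:ℝ)*(2*(a:ℝ)) := mul_le_mul_of_nonneg_left hS2aR haR.le
        have m4 : 0 ≤ (b:ℝ)*S := mul_nonneg hbR.le hSR
        linarith [hnbig, m1, m2, m3, m4]
      · have m5 : (b:ℝ)*2 ≤ (b:ℝ)*S := mul_le_mul_of_nonneg_left hS2R hbR.le
        have m6 : (a:ℝ)*2 ≤ (a:ℝ)*S := mul_le_mul_of_nonneg_left hS2R haR.le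
        linarith [m5, m6]
    have c2 : |1/M - t*(b:ℝ)| ≤ v2 := by
      rw [e2', abs_of_pos hv2pos]
    have c3 : dni ((S:ℝ)/M + t*(n:ℝ)) ≤ v2 := by
      rw [e3']
      exact le_trans (dni_le_abs _) (le_of_eq (abs_of_pos hv2pos))
    exact le_antisymm (le_trans (hupper t) (max_le c1 (max_le c2 c3))) hlo
  · -- branch 3
    intro hS3 hS3'
    have hS3R : 2*(a:ℝ)+1 ≤ (S:ℝ) := by exact_mod_cast (by omega : 2*a+1 ≤ S)
    have hS3'R : (S:ℝ) ≤ 2*(a:ℝ)+2*(b:ℝ)-2 := by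
      have h5 : S + 2 ≤ 2*a+2*b := by omega
      have h6 : (S:ℝ) + 2 ≤ 2*(a:ℝ)+2*b := by exact_mod_cast h5
      linarith
    have hv32 : v3 ≤ v2 := hcmp3 hS3R
    have hlo : v3 ≤ mu3 a b n t1 t2 0 := by
      have h9 : min v2 v3 ≤ mu3 a b n t1 t2 0 := by unfold mu3; exact le_ciInf hlowmin
      rw [min_eq_right hv32] at h9
      exact h9
    set t : ℝ := (2*(a:ℝ)+2*(b:ℝ)-(S:ℝ)-1)/(M*((a:ℝ)+n)) with htdef
    have hden : (0:ℝ) < M*((a:ℝ)+n) := by positivity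
    have e1' : 1/M + t*(a:ℝ) = v3 := by
      rw [htdef, hv3def, hMdef]; field_simp; ring
    have c1 : |1/M + t*(a:ℝ)| ≤ v3 := by
      rw [e1', abs_of_pos hv3pos]
    have e2' : 1/M - t*(b:ℝ) = ((a:ℝ)+(n:ℝ)-(b:ℝ)*(2*(a:ℝ)+2*(b:ℝ)-(S:ℝ)-1))/(M*((a:ℝ)+n)) := by
      rw [htdef, hMdef]; field_simp
    have c2 : |1/M - t*(b:ℝ)| ≤ v3 := by
      rw [e2', hv3def, abs_div, abs_of_pos hden, div_le_div_iff₀ hden hden]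
      apply mul_le_mul_of_nonneg_right _ hden.le
      rw [abs_le]
      constructor
      · have m1 : (b:ℝ)*(2*(a:ℝ)+2*(b:ℝ)-(S:ℝ)-1) ≤ (b:ℝ)*(2*(a:ℝ)+2*(b:ℝ)) :=
          mul_le_mul_of_nonneg_left (by linarith) hbR.le
        have m2 : (a:ℝ)*S ≤ (a:ℝ)*(2*(a:ℝ)+2*(b:ℝ)) := mul_le_mul_of_nonneg_left hSltR.le haR.le
        linarith [hnbig2, m1, m2]
      · have m3 : 0 ≤ (b:ℝ)*(2*(a:ℝ)+2*(b:ℝ)-(S:ℝ)-1) := by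
          apply mul_nonneg hbR.le; linarith
        have m4 : (a:ℝ)*2 ≤ (a:ℝ)*(2*(a:ℝ)+2*(b:ℝ)-(S:ℝ)) :=
          mul_le_mul_of_nonneg_left (by linarith) haR.le
        linarith [m3, m4]
    have e3' : (S:ℝ)/M + t*(n:ℝ) - ((1:ℤ):ℝ) = -v3 := by
      push_cast
      rw [htdef, hv3def, hMdef]; field_simp; ring
    have c3 : dni ((S:ℝ)/M + t*(n:ℝ)) ≤ v3 := by
      calc dni ((S:ℝ)/M + t*(n:ℝ)) ≤ |(S:ℝ)/M + t*(n:ℝ) - ((1:ℤ):ℝ)| := dni_le_int _ 1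
        _ = v3 := by rw [e3', abs_neg, abs_of_pos hv3pos]
    exact le_antisymm (le_trans (hupper t) (max_le c1 (max_le c2 c3))) hlo
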